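/- arXiv:1204.1233 — 2 statements merged into one kernel-verified Lean document; each statement's English description precedes it below -/
import Mathlib

section
/- Let γ > 0, d ≥ 1, and θ = γ^{-1} d^{1-1/γ}. Then the function p(x_1, y_1, x_2, y_2) = γ² exp{-γ(y_1 + y_2 + θ|x_1| + θ|x_2|) - 2^d (γθ)^{-d} e^{-γ y_2}} · 1{y_1 > y_2} is a probability density on R^d × R × R^d × R, i.e., its integral equals 1. -/
open MeasureTheory Real

open Set Filter Topology


lemma jd_hasDerivAt_F {c : ℝ} (hc : c ≠ 0) (γ y : ℝ) :
    HasDerivAt (fun y : ℝ => c⁻¹ * exp (-c * exp (-γ * y)))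
      (γ * exp (-γ * y) * exp (-c * exp (-γ * y))) y := by
  have h1 : HasDerivAt (fun y : ℝ => -γ * y) (-γ) y := by
    simpa using (hasDerivAt_id y).const_mul (-γ)
  have h4 := (((h1.exp).const_mul (-c)).exp).const_mul c⁻¹
  refine h4.congr_deriv ?_
  field_simp

lemma jd_tendsto_bot {γ c : ℝ} (hγ : 0 < γ) (hc : 0 < c) :
    Tendsto (fun y : ℝ => c⁻¹ * exp (-c * exp (-γ * y))) atBot (𝓝 0) := by
  have h1 : Tendsto (fun y : ℝ => -γ * y) atBot atTop :=
    (tendsto_const_mul_atTop_of_neg (neg_lt_zero.2 hγ)).2 tendsto_id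
  have h2 : Tendsto (fun y : ℝ => exp (-γ * y)) atBot atTop :=
    tendsto_exp_atTop.comp h1
  have h3 : Tendsto (fun y : ℝ => -c * exp (-γ * y)) atBot atBot :=
    (tendsto_const_mul_atBot_of_neg (neg_lt_zero.2 hc)).2 h2
  have h4 : Tendsto (fun y : ℝ => exp (-c * exp (-γ * y))) atBot (𝓝 0) :=
    tendsto_exp_atBot.comp h3
  simpa using h4.const_mul c⁻¹

lemma jd_tendsto_top {γ c : ℝ} (hγ : 0 < γ) :
    Tendsto (fun y : ℝ => c⁻¹ * exp (-c * exp (-γ * y))) atTop (𝓝 c⁻¹) := by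
  have h1 : Tendsto (fun y : ℝ => -γ * y) atTop atBot :=
    (tendsto_const_mul_atBot_of_neg (neg_lt_zero.2 hγ)).2 tendsto_id
  have h2 : Tendsto (fun y : ℝ => exp (-γ * y)) atTop (𝓝 0) :=
    tendsto_exp_atBot.comp h1
  have h4 : Tendsto (fun y : ℝ => exp (-c * exp (-γ * y))) atTop (𝓝 (exp (-c * 0))) :=
    (continuous_exp.tendsto _).comp (h2.const_mul (-c))
  have h5 := h4.const_mul c⁻¹
  simpa using h5

-- mirror: derivative of y ↦ -(F (-y)) is ψ (-y)
lemma jd_hasDerivAt_G {c : ℝ} (hc : c ≠ 0) (γ y : ℝ) :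
    HasDerivAt (fun y : ℝ => -(c⁻¹ * exp (-c * exp (-γ * -y))))
      (γ * exp (-γ * -y) * exp (-c * exp (-γ * -y))) y := by
  have h := ((jd_hasDerivAt_F hc γ (-y)).comp y (hasDerivAt_neg y)).neg
  refine h.congr_deriv ?_
  ring

lemma jd_integrableOn_Ioi {γ c : ℝ} (hγ : 0 < γ) (hc : 0 < c) (b : ℝ) :
    IntegrableOn (fun y : ℝ => γ * exp (-γ * y) * exp (-c * exp (-γ * y))) (Ioi b) :=
  integrableOn_Ioi_deriv_of_nonneg' (fun x _ => jd_hasDerivAt_F hc.ne' γ x)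
    (fun x _ => by positivity) (jd_tendsto_top hγ)

lemma jd_integrableOn_Iic {γ c : ℝ} (hγ : 0 < γ) (hc : 0 < c) (b : ℝ) :
    IntegrableOn (fun y : ℝ => γ * exp (-γ * y) * exp (-c * exp (-γ * y))) (Iic b) := by
  have hG : Tendsto (fun y : ℝ => -(c⁻¹ * exp (-c * exp (-γ * -y)))) atTop (𝓝 0) := by
    have := ((jd_tendsto_bot hγ hc).comp tendsto_neg_atTop_atBot).neg
    simpa [Function.comp] using this
  have hInt : IntegrableOn (fun y : ℝ => γ * exp (-γ * -y) * exp (-c * exp (-γ * -y)))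
      (Ioi (-b)) :=
    integrableOn_Ioi_deriv_of_nonneg' (fun x _ => jd_hasDerivAt_G hc.ne' γ x)
      (fun x _ => by positivity) hG
  have m : MeasurableEmbedding fun x : ℝ => -x := (Homeomorph.neg ℝ).measurableEmbedding
  rw [← Measure.map_neg_eq_self (volume : Measure ℝ), m.integrableOn_map_iff]
  simp_rw [Function.comp_def, neg_preimage, neg_Iic]
  exact (integrableOn_Ici_iff_integrableOn_Ioi).mpr hInt

lemma jd_integral_Iic {γ c : ℝ} (hγ : 0 < γ) (hc : 0 < c) (b : ℝ) :
    ∫ y in Iic b, γ * exp (-γ * y) * exp (-c * exp (-γ * y))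
      = c⁻¹ * exp (-c * exp (-γ * b)) := by
  have hG : Tendsto (fun y : ℝ => -(c⁻¹ * exp (-c * exp (-γ * -y)))) atTop (𝓝 0) := by
    have := ((jd_tendsto_bot hγ hc).comp tendsto_neg_atTop_atBot).neg
    simpa [Function.comp] using this
  have key := integral_Ioi_of_hasDerivAt_of_nonneg' (a := -b)
    (fun x _ => jd_hasDerivAt_G hc.ne' γ x) (fun x _ => by positivity) hG
  rw [integral_comp_neg_Ioi (-b) (fun y => γ * exp (-γ * y) * exp (-c * exp (-γ * y)))] at key
  simpa using key

lemma jd_integrable {γ c : ℝ} (hγ : 0 < γ) (hc : 0 < c) :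
    Integrable (fun y : ℝ => γ * exp (-γ * y) * exp (-c * exp (-γ * y))) := by
  rw [← integrableOn_univ, ← Set.Iic_union_Ioi (a := (0:ℝ))]
  exact (jd_integrableOn_Iic hγ hc 0).union (jd_integrableOn_Ioi hγ hc 0)

lemma jd_integral {γ c : ℝ} (hγ : 0 < γ) (hc : 0 < c) :
    ∫ y : ℝ, γ * exp (-γ * y) * exp (-c * exp (-γ * y)) = c⁻¹ := by
  have := integral_of_hasDerivAt_of_tendsto (fun x => jd_hasDerivAt_F hc.ne' γ x)
    (jd_integrable hγ hc) (jd_tendsto_bot hγ hc) (jd_tendsto_top hγ)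
  simpa using this


lemma jd_exp_Ioi_integral {a : ℝ} (ha : 0 < a) :
    ∫ t in Ioi (0:ℝ), exp (-a * t) = a⁻¹ := by
  have hder : ∀ x : ℝ, HasDerivAt (fun t : ℝ => -(a⁻¹ * exp (-a * t))) (exp (-a * x)) x := by
    intro x
    have h1 : HasDerivAt (fun t : ℝ => -a * t) (-a) x := by
      simpa using (hasDerivAt_id x).const_mul (-a)
    have := ((h1.exp).const_mul a⁻¹).neg
    refine this.congr_deriv ?_
    field_simp
  have htop : Tendsto (fun t : ℝ => -(a⁻¹ * exp (-a * t))) atTop (𝓝 0) := by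
    have h1 : Tendsto (fun t : ℝ => -a * t) atTop atBot :=
      (tendsto_const_mul_atBot_of_neg (neg_lt_zero.2 ha)).2 tendsto_id
    have := ((tendsto_exp_atBot.comp h1).const_mul a⁻¹).neg
    simpa using this
  have := integral_Ioi_of_hasDerivAt_of_nonneg' (a := 0)
    (fun x _ => hder x) (fun x _ => by positivity) htop
  simpa using this

lemma jd_exp_abs_integrable {a : ℝ} (ha : 0 < a) :
    Integrable (fun t : ℝ => exp (-a * |t|)) := by
  have hIoi : IntegrableOn (fun t : ℝ => exp (-a * |t|)) (Ioi 0) := by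
    refine ((exp_neg_integrableOn_Ioi 0 ha)).congr_fun (fun x hx => ?_) measurableSet_Ioi
    rw [abs_of_pos hx]
  have hIic : IntegrableOn (fun t : ℝ => exp (-a * |t|)) (Iic 0) := by
    have m : MeasurableEmbedding fun x : ℝ => -x := (Homeomorph.neg ℝ).measurableEmbedding
    rw [← Measure.map_neg_eq_self (volume : Measure ℝ), m.integrableOn_map_iff]
    simp_rw [Function.comp_def, abs_neg, neg_preimage, neg_Iic, neg_zero]
    exact (integrableOn_Ici_iff_integrableOn_Ioi).mpr hIoi
  rw [← integrableOn_univ, ← Set.Iic_union_Ioi (a := (0:ℝ))]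
  exact hIic.union hIoi

lemma jd_exp_abs_integral {a : ℝ} (ha : 0 < a) :
    ∫ t : ℝ, exp (-a * |t|) = 2 / a := by
  rw [integral_comp_abs (f := fun x => exp (-a * x)), jd_exp_Ioi_integral ha]
  rw [div_eq_mul_inv]

lemma jd_phi_eq {d : ℕ} (a : ℝ) :
    (fun x : Fin d → ℝ => exp (-a * ∑ i, |x i|))
      = fun x : Fin d → ℝ => ∏ i, exp (-a * |x i|) := by
  funext x
  rw [← Real.exp_sum]
  congr 1
  rw [Finset.mul_sum]

lemma jd_phi_integrable {d : ℕ} {a : ℝ} (ha : 0 < a) :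
    Integrable (fun x : Fin d → ℝ => exp (-a * ∑ i, |x i|)) := by
  rw [jd_phi_eq]
  exact Integrable.fintype_prod (fun _ => jd_exp_abs_integrable ha)

lemma jd_phi_integral {d : ℕ} {a : ℝ} (ha : 0 < a) :
    ∫ x : Fin d → ℝ, exp (-a * ∑ i, |x i|) = (2 / a) ^ d := by
  rw [jd_phi_eq, integral_fintype_prod_volume_eq_pow (ι := Fin d) (fun t : ℝ => exp (-a * |t|)),
    jd_exp_abs_integral ha, Fintype.card_fin]

/-- The function
`p(x₁,y₁,x₂,y₂) = γ² exp{-γ(y₁+y₂+θ|x₁|+θ|x₂|) - 2^d (γθ)^{-d} e^{-γ y₂}} 1_{y₁ > y₂}`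
is a probability density on `ℝ^d × ℝ × ℝ^d × ℝ`. -/
theorem joint_density_integrates_to_one
    (d : ℕ) (hd : 1 ≤ d) (γ : ℝ) (hγ : 0 < γ) (θ : ℝ)
    (hθ : θ = γ⁻¹ * (d : ℝ) ^ (1 - 1 / γ)) :
    ∫ q : ((Fin d → ℝ) × ℝ) × ((Fin d → ℝ) × ℝ),
      (if q.2.2 < q.1.2 then
        γ ^ 2 * exp (-γ * (q.1.2 + q.2.2 + θ * ∑ i, |q.1.1 i| + θ * ∑ i, |q.2.1 i|)
          - 2 ^ d * (γ * θ) ^ (-(d : ℤ)) * exp (-γ * q.2.2))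
      else 0) = 1 := by
  have hd0 : (0:ℝ) < (d:ℝ) := by exact_mod_cast Nat.lt_of_lt_of_le Nat.zero_lt_one hd
  have hθ0 : 0 < θ := by
    rw [hθ]; exact mul_pos (inv_pos.2 hγ) (rpow_pos_of_pos hd0 _)
  set a : ℝ := γ * θ with ha
  have ha0 : 0 < a := mul_pos hγ hθ0
  set c : ℝ := 2 ^ d * a ^ (-(d:ℤ)) with hc
  have hcval : c = (2 / a) ^ d := by
    rw [hc, zpow_neg, zpow_natCast, div_pow, div_eq_mul_inv]
  have hc0 : 0 < c := by rw [hcval]; exact pow_pos (div_pos two_pos ha0) d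
  set S : Set (((Fin d → ℝ) × ℝ) × ((Fin d → ℝ) × ℝ)) := {q | q.2.2 < q.1.2} with hS
  have hSm : MeasurableSet S := measurableSet_lt measurable_snd.snd measurable_fst.snd
  set Φ : (Fin d → ℝ) → ℝ := fun x => exp (-a * ∑ i, |x i|) with hΦ
  set f : (Fin d → ℝ) × ℝ → ℝ := fun p => Φ p.1 * (γ * exp (-γ * p.2)) with hf
  set g : (Fin d → ℝ) × ℝ → ℝ :=
    fun p => Φ p.1 * (γ * exp (-γ * p.2) * exp (-c * exp (-γ * p.2))) with hg
  set h : (Fin d → ℝ) × ℝ → ℝ :=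
    fun p => Φ p.1 * (γ * exp (-γ * p.2) * exp (-(c/2) * exp (-γ * p.2))) with hh
  -- continuity
  have hΦc : Continuous Φ := by
    rw [hΦ]
    exact continuous_exp.comp (continuous_const.mul
      (continuous_finset_sum _ fun i _ => (continuous_apply i).abs))
  have hfc : Continuous f := by
    rw [hf]; fun_prop
  have hgc : Continuous g := by
    rw [hg]; fun_prop
  -- step 1: rewrite the integrand as an indicator
  have hrw : ∀ q : ((Fin d → ℝ) × ℝ) × ((Fin d → ℝ) × ℝ),
      (if q.2.2 < q.1.2 then
        γ ^ 2 * exp (-γ * (q.1.2 + q.2.2 + θ * ∑ i, |q.1.1 i| + θ * ∑ i, |q.2.1 i|)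
          - c * exp (-γ * q.2.2))
      else 0) = S.indicator (fun q => f q.1 * g q.2) q := by
    intro q
    rw [Set.indicator_apply]
    simp only [hS, Set.mem_setOf_eq]
    split_ifs with hq
    · simp only [hf, hg, hΦ]
      have hX : -γ * (q.1.2 + q.2.2 + θ * ∑ i, |q.1.1 i| + θ * ∑ i, |q.2.1 i|)
            - c * exp (-γ * q.2.2)
          = (-a * ∑ i, |q.1.1 i|) + (-γ * q.1.2) + ((-a * ∑ i, |q.2.1 i|)
            + ((-γ * q.2.2) + (-c * exp (-γ * q.2.2)))) := by
        rw [ha]; ring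
      rw [hX, exp_add, exp_add, exp_add, exp_add]
      ring
    · rfl
  -- integrability of the dominating function
  have hψ : Integrable (fun y : ℝ => γ * exp (-γ * y) * exp (-(c/2) * exp (-γ * y))) :=
    jd_integrable hγ (half_pos hc0)
  have hΦint : Integrable Φ := by rw [hΦ]; exact jd_phi_integrable ha0
  have hhint : Integrable h := by
    have := hΦint.mul_prod hψ
    rwa [← Measure.volume_eq_prod] at this
  have hH : Integrable (fun q : ((Fin d → ℝ) × ℝ) × ((Fin d → ℝ) × ℝ) => h q.1 * h q.2) := by
    have := hhint.mul_prod hhint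
    rwa [← Measure.volume_eq_prod] at this
  -- integrability of the integrand
  have hFint : Integrable (S.indicator fun q => f q.1 * g q.2) := by
    refine hH.mono' (((hfc.comp continuous_fst).mul
      (hgc.comp continuous_snd)).aestronglyMeasurable.indicator hSm) ?_
    refine Filter.Eventually.of_forall fun q => ?_
    rw [Real.norm_eq_abs, abs_of_nonneg (Set.indicator_nonneg (fun q _ => by
      simp only [hf, hg, hΦ]; positivity) q)]
    by_cases hq : q ∈ S
    · rw [Set.indicator_of_mem hq]
      have hq' : q.2.2 < q.1.2 := hq
      have key1 : f q.1 * g q.2 =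
          (exp (-a * ∑ i, |q.1.1 i|) * (γ * exp (-γ * q.1.2))
            * (exp (-a * ∑ i, |q.2.1 i|) * (γ * exp (-γ * q.2.2))))
          * exp (-c * exp (-γ * q.2.2)) := by
        simp only [hf, hg, hΦ]; ring
      have key2 : h q.1 * h q.2 =
          (exp (-a * ∑ i, |q.1.1 i|) * (γ * exp (-γ * q.1.2))
            * (exp (-a * ∑ i, |q.2.1 i|) * (γ * exp (-γ * q.2.2))))
          * (exp (-(c/2) * exp (-γ * q.1.2)) * exp (-(c/2) * exp (-γ * q.2.2))) := by
        simp only [hh, hΦ]; ring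
      rw [key1, key2]
      refine mul_le_mul_of_nonneg_left ?_ (by positivity)
      rw [← exp_add, exp_le_exp]
      have hE : exp (-γ * q.1.2) ≤ exp (-γ * q.2.2) := by
        apply exp_le_exp.2
        nlinarith
      nlinarith
    · rw [Set.indicator_of_notMem hq]
      simp only [hh, hΦ]
      positivity
  -- inner integral
  have hinner : ∀ p₁ : (Fin d → ℝ) × ℝ,
      ∫ p₂ : (Fin d → ℝ) × ℝ, S.indicator (fun q => f q.1 * g q.2) (p₁, p₂)
        = f p₁ * exp (-c * exp (-γ * p₁.2)) := by
    intro p₁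
    have h1 : ∀ p₂ : (Fin d → ℝ) × ℝ, S.indicator (fun q => f q.1 * g q.2) (p₁, p₂)
        = f p₁ * ((univ ×ˢ Iio p₁.2).indicator g p₂) := by
      intro p₂
      rw [Set.indicator_apply, Set.indicator_apply]
      simp only [hS, Set.mem_setOf_eq, Set.mem_prod, Set.mem_univ, true_and, Set.mem_Iio]
      split_ifs with hq
      · rfl
      · rw [mul_zero]
    rw [integral_congr_ae (Filter.Eventually.of_forall h1), integral_const_mul,
      integral_indicator (MeasurableSet.univ.prod measurableSet_Iio)]
    have h2 : ∫ p₂ in univ ×ˢ Iio p₁.2, g p₂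
        = (∫ x, Φ x) * ∫ y in Iio p₁.2, γ * exp (-γ * y) * exp (-c * exp (-γ * y)) := by
      rw [hg, Measure.volume_eq_prod,
        setIntegral_prod_mul Φ (fun y : ℝ => γ * exp (-γ * y) * exp (-c * exp (-γ * y))),
        Measure.restrict_univ]
    rw [h2, ← integral_Iic_eq_integral_Iio, jd_integral_Iic hγ hc0, hΦ,
      jd_phi_integral ha0, ← hcval, mul_assoc, ← mul_assoc c c⁻¹,
      mul_inv_cancel₀ hc0.ne', one_mul, hf]
    ring
  -- put everything together
  calc ∫ q : ((Fin d → ℝ) × ℝ) × ((Fin d → ℝ) × ℝ),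
      (if q.2.2 < q.1.2 then
        γ ^ 2 * exp (-γ * (q.1.2 + q.2.2 + θ * ∑ i, |q.1.1 i| + θ * ∑ i, |q.2.1 i|)
          - c * exp (-γ * q.2.2))
      else 0)
      = ∫ q : ((Fin d → ℝ) × ℝ) × ((Fin d → ℝ) × ℝ),
          S.indicator (fun q => f q.1 * g q.2) q :=
        integral_congr_ae (Filter.Eventually.of_forall hrw)
    _ = ∫ p₁ : (Fin d → ℝ) × ℝ, ∫ p₂ : (Fin d → ℝ) × ℝ,
          S.indicator (fun q => f q.1 * g q.2) (p₁, p₂) := by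
        rw [Measure.volume_eq_prod]
        exact integral_prod _ (by rwa [Measure.volume_eq_prod] at hFint)
    _ = ∫ p₁ : (Fin d → ℝ) × ℝ, Φ p₁.1 * (γ * exp (-γ * p₁.2) * exp (-c * exp (-γ * p₁.2))) := by
        refine integral_congr_ae (Filter.Eventually.of_forall fun p₁ => ?_)
        dsimp only
        rw [hinner p₁, hf]
        ring
    _ = (∫ x, Φ x) * ∫ y : ℝ, γ * exp (-γ * y) * exp (-c * exp (-γ * y)) := by
        rw [Measure.volume_eq_prod]
        exact integral_prod_mul Φ (fun y : ℝ => γ * exp (-γ * y) * exp (-c * exp (-γ * y)))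
    _ = c * c⁻¹ := by
        rw [hΦ, jd_phi_integral ha0, ← hcval, jd_integral hγ hc0]
    _ = 1 := mul_inv_cancel₀ hc0.ne'
end

section
/- Let {ξ(z) : z ∈ Z^d} be i.i.d. Weibull(γ) random variables, γ > 0, and let ξ_r^{(k)} denote the k-th largest value of ξ over the l^1-ball of radius r. Then for each κ ∈ (0, d), almost surely ξ_r^{(⌊r^κ⌋)} / ((d - κ) log r)^{1/γ} → 1 as r → ∞. -/
open MeasureTheory ProbabilityTheory Real Filter
open scoped ENNReal

namespace WeibullOS


/-- The ℓ¹ ball of radius `R` in `ℤ^d`. -/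
def ballSet (d : ℕ) (R : ℝ) : Set (Fin d → ℤ) := {z | ((∑ i, |z i| : ℤ) : ℝ) ≤ R}

lemma ballSet_mono (d : ℕ) {R S : ℝ} (h : R ≤ S) : ballSet d R ⊆ ballSet d S :=
  fun _ hz => le_trans hz h

lemma ballSet_subset_Icc (d : ℕ) (R : ℝ) :
    ballSet d R ⊆ ↑(Finset.Icc (fun _ => -⌈R⌉ : Fin d → ℤ) (fun _ => ⌈R⌉)) := by
  intro z hz
  have hz' : ((∑ i, |z i| : ℤ) : ℝ) ≤ R := hz
  have hR : ((∑ i, |z i| : ℤ) : ℝ) ≤ (⌈R⌉ : ℝ) := hz'.trans (Int.le_ceil R)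
  have hsum : (∑ i, |z i| : ℤ) ≤ ⌈R⌉ := by exact_mod_cast hR
  simp only [Finset.coe_Icc, Set.mem_Icc, Pi.le_def]
  have key : ∀ i, |z i| ≤ ⌈R⌉ := fun i =>
    le_trans (Finset.single_le_sum (fun j _ => abs_nonneg (z j)) (Finset.mem_univ i)) hsum
  exact ⟨fun i => (abs_le.mp (key i)).1, fun i => (abs_le.mp (key i)).2⟩

lemma ballSet_finite (d : ℕ) (R : ℝ) : (ballSet d R).Finite :=
  Set.Finite.subset (Finset.finite_toSet _) (ballSet_subset_Icc d R)

lemma ballSet_ncard_le (d : ℕ) {R : ℝ} (hR : 0 ≤ R) :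
    ((ballSet d R).ncard : ℝ) ≤ (2 * R + 3) ^ d := by
  have h1 : (ballSet d R).ncard ≤ (Finset.Icc (fun _ => -⌈R⌉ : Fin d → ℤ) (fun _ => ⌈R⌉)).card := by
    rw [← Set.ncard_coe_finset]
    exact Set.ncard_le_ncard (ballSet_subset_Icc d R) (Finset.finite_toSet _)
  have h2 : (Finset.Icc (fun _ => -⌈R⌉ : Fin d → ℤ) (fun _ => ⌈R⌉)).card
      = ((2 * ⌈R⌉ + 1).toNat) ^ d := by
    rw [Pi.card_Icc]
    simp [Int.card_Icc]
    congr 1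
    ring_nf
  have h3 : (((2 * ⌈R⌉ + 1).toNat : ℝ)) ≤ 2 * R + 3 := by
    have hc : (⌈R⌉ : ℝ) ≤ R + 1 := by
      have := Int.ceil_lt_add_one R; linarith
    have hc0 : (0:ℤ) ≤ 2 * ⌈R⌉ + 1 := by
      have : (0:ℤ) ≤ ⌈R⌉ := Int.ceil_nonneg hR; omega
    have h4 : (((2 * ⌈R⌉ + 1).toNat : ℕ) : ℝ) = ((2 * ⌈R⌉ + 1 : ℤ) : ℝ) := by
      exact_mod_cast congrArg (Int.cast : ℤ → ℝ) (Int.toNat_of_nonneg hc0)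
    rw [h4]
    push_cast
    linarith
  calc ((ballSet d R).ncard : ℝ) ≤ (((2 * ⌈R⌉ + 1).toNat) ^ d : ℕ) := by exact_mod_cast h1.trans (le_of_eq h2)
    _ ≤ (2 * R + 3) ^ d := by
        push_cast
        exact pow_le_pow_left₀ (by positivity) h3 d

lemma ballSet_ncard_ge (d : ℕ) (hd : 1 ≤ d) (n : ℕ) :
    ((n / d : ℕ) + 1 : ℝ) ^ d ≤ ((ballSet d (n : ℝ)).ncard : ℝ) := by
  set L : ℕ := n / d with hL
  have hsub : ↑(Finset.Icc (fun _ => 0 : Fin d → ℤ) (fun _ => (L : ℤ))) ⊆ ballSet d (n : ℝ) := by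
    intro z hz
    simp only [Finset.coe_Icc, Set.mem_Icc] at hz
    have hzz : ∀ i, |z i| ≤ (L : ℤ) := fun i => by
      rw [abs_of_nonneg (hz.1 i)]; exact hz.2 i
    have hsum : (∑ i, |z i| : ℤ) ≤ d * L := by
      calc (∑ i, |z i| : ℤ) ≤ ∑ _i : Fin d, (L:ℤ) := Finset.sum_le_sum (fun i _ => hzz i)
        _ = d * L := by simp [mul_comm]
    have hdL : (d * L : ℤ) ≤ n := by exact_mod_cast Nat.mul_div_le n d
    show ((∑ i, |z i| : ℤ) : ℝ) ≤ (n : ℝ)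
    have : (∑ i, |z i| : ℤ) ≤ (n : ℤ) := hsum.trans hdL
    exact_mod_cast this
  have hcard : (Finset.Icc (fun _ => 0 : Fin d → ℤ) (fun _ => (L : ℤ))).card = (L + 1) ^ d := by
    rw [Pi.card_Icc]
    simp [Int.card_Icc]
  have := Set.ncard_le_ncard hsub (ballSet_finite d n)
  rw [Set.ncard_coe_finset, hcard] at this
  exact_mod_cast this



section Prob
variable {d : ℕ} {γ : ℝ} {Ω : Type*} [MeasurableSpace Ω] {μ : Measure Ω} [IsProbabilityMeasure μ]
  {ξ : (Fin d → ℤ) → Ω → ℝ}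

lemma tail_eq (hmeas : ∀ z, Measurable (ξ z))
    (hdist : ∀ z, ∀ x : ℝ, 0 ≤ x → μ {ω | ξ z ω < x} = ENNReal.ofReal (1 - exp (-(x ^ γ))))
    (z : Fin d → ℤ) {t : ℝ} (ht : 0 ≤ t) :
    μ (ξ z ⁻¹' Set.Ici t) = ENNReal.ofReal (exp (-(t ^ γ))) := by
  have hIio : μ (ξ z ⁻¹' Set.Iio t) = ENNReal.ofReal (1 - exp (-(t ^ γ))) := hdist z t ht
  have hms : MeasurableSet (ξ z ⁻¹' Set.Iio t) := (hmeas z) measurableSet_Iio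
  have hcompl : ξ z ⁻¹' Set.Ici t = (ξ z ⁻¹' Set.Iio t)ᶜ := by
    rw [← Set.preimage_compl, Set.compl_Iio]
  have h0 : (0:ℝ) ≤ 1 - exp (-(t ^ γ)) := by
    have : exp (-(t ^ γ)) ≤ 1 := exp_le_one_iff.mpr (neg_nonpos.mpr (rpow_nonneg ht γ))
    linarith
  rw [hcompl, prob_compl_eq_one_sub hms, hIio, ← ENNReal.ofReal_one,
    ← ENNReal.ofReal_sub _ h0]
  congr 1
  ring

lemma head_le (hdist : ∀ z, ∀ x : ℝ, 0 ≤ x →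
      μ {ω | ξ z ω < x} = ENNReal.ofReal (1 - exp (-(x ^ γ))))
    (z : Fin d → ℤ) {t : ℝ} (ht : 0 ≤ t) :
    μ (ξ z ⁻¹' Set.Iio t) ≤ ENNReal.ofReal (exp (-(exp (-(t ^ γ))))) := by
  have hIio : μ (ξ z ⁻¹' Set.Iio t) = ENNReal.ofReal (1 - exp (-(t ^ γ))) := hdist z t ht
  rw [hIio]
  apply ENNReal.ofReal_le_ofReal
  have := add_one_le_exp (-(exp (-(t ^ γ))))
  linarith

lemma count_bound (hindep : iIndepFun ξ μ)
    (P : Finset (Fin d → ℤ)) (c : ℕ) (A : Set ℝ) (hA : MeasurableSet A) (q : ℝ≥0∞)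
    (hq : ∀ z, μ (ξ z ⁻¹' A) ≤ q) :
    μ {ω | c ≤ {z | z ∈ P ∧ ξ z ω ∈ A}.ncard} ≤ (P.card.choose c) * q ^ c := by
  have hsub : {ω | c ≤ {z | z ∈ P ∧ ξ z ω ∈ A}.ncard} ⊆
      ⋃ S ∈ P.powersetCard c, ⋂ z ∈ S, ξ z ⁻¹' A := by
    intro ω hω
    obtain ⟨T, hTsub, hTcard⟩ := Set.exists_subset_card_eq hω
    have hTfin : T.Finite := (P.finite_toSet.subset (fun z hz => (hTsub hz).1))
    refine Set.mem_iUnion₂.mpr ⟨hTfin.toFinset, ?_, ?_⟩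
    · rw [Finset.mem_powersetCard]
      constructor
      · intro z hz
        exact (hTsub (hTfin.mem_toFinset.mp hz)).1
      · rw [← Set.ncard_eq_toFinset_card T hTfin]; exact hTcard
    · rw [Set.mem_iInter₂]
      intro z hz
      exact (hTsub (hTfin.mem_toFinset.mp hz)).2
  calc μ {ω | c ≤ {z | z ∈ P ∧ ξ z ω ∈ A}.ncard}
      ≤ ∑ S ∈ P.powersetCard c, μ (⋂ z ∈ S, ξ z ⁻¹' A) :=
        (measure_mono hsub).trans (measure_biUnion_finset_le _ _)
    _ ≤ ∑ _S ∈ P.powersetCard c, q ^ c := by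
        refine Finset.sum_le_sum fun S hS => ?_
        rw [hindep.meas_biInter (fun z _ => ⟨A, hA, rfl⟩)]
        calc ∏ z ∈ S, μ (ξ z ⁻¹' A) ≤ ∏ _z ∈ S, q :=
              Finset.prod_le_prod' (fun z _ => hq z)
          _ = q ^ c := by rw [Finset.prod_const, (Finset.mem_powersetCard.mp hS).2]
    _ = (P.card.choose c) * q ^ c := by
        rw [Finset.sum_const, Finset.card_powersetCard, nsmul_eq_mul]

lemma bc_helper (s : ℕ → Set Ω)
    (h : ∀ᶠ n in atTop, μ (s n) ≤ ENNReal.ofReal ((n : ℝ) ^ (-2 : ℝ))) :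
    ∀ᵐ ω ∂μ, ∀ᶠ n in atTop, ω ∉ s n := by
  apply ae_eventually_notMem
  obtain ⟨N, hN⟩ := eventually_atTop.mp h
  have hsum : Summable (fun n : ℕ => ((n + N : ℕ) : ℝ) ^ (-2 : ℝ)) := by
    have h2 : Summable (fun n : ℕ => ((n : ℝ)) ^ (-2 : ℝ)) :=
      Real.summable_nat_rpow.mpr (by norm_num)
    exact (summable_nat_add_iff N).mpr h2
  have h1 : ∑' n, μ (s n) ≤
      ∑ i ∈ Finset.range N, μ (s i) + ∑' i : ℕ, ENNReal.ofReal (((i + N : ℕ) : ℝ) ^ (-2 : ℝ)) := by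
    rw [← Summable.sum_add_tsum_nat_add' (f := fun n => μ (s n)) (k := N) ENNReal.summable]
    exact add_le_add_right (ENNReal.tsum_le_tsum fun i => hN (i + N) (Nat.le_add_left _ _)) _
  have h2 : ∑' i : ℕ, ENNReal.ofReal (((i + N : ℕ) : ℝ) ^ (-2 : ℝ)) ≠ ⊤ := by
    rw [← ENNReal.ofReal_tsum_of_nonneg (fun n => rpow_nonneg (Nat.cast_nonneg _) _) hsum]
    exact ENNReal.ofReal_ne_top
  refine ne_top_of_le_ne_top ?_ h1
  exact ENNReal.add_ne_top.mpr ⟨(ENNReal.sum_lt_top.mpr fun i _ => measure_lt_top μ _).ne, h2⟩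

end Prob


lemma upper_term_bound {d : ℕ} {κ ε : ℝ} (hκ : 0 < κ) (hκd : κ < d) (hε : 0 < ε) :
    ∀ᶠ n : ℕ in atTop, ∀ N : ℕ,
      (N : ℝ) ≤ (2 * ((n : ℝ) + 1) + 3) ^ d →
      (N.choose ⌊(n : ℝ) ^ κ⌋₊ : ℝ) *
        exp (-((1 + ε) * (((d : ℝ) - κ) * log n))) ^ ⌊(n : ℝ) ^ κ⌋₊ ≤ (n : ℝ) ^ (-2 : ℝ) := by
  have hdκ : 0 < (d : ℝ) - κ := by linarith
  set c₂ : ℝ := ε * ((d : ℝ) - κ) / 2 with hc₂def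
  have hc₂pos : 0 < c₂ := by positivity
  set C : ℝ := 2 * exp 1 * 4 ^ d with hCdef
  have hCpos : 0 < C := by positivity
  have hnκ : Tendsto (fun n : ℕ => (n : ℝ) ^ κ) atTop atTop :=
    (tendsto_rpow_atTop hκ).comp tendsto_natCast_atTop_atTop
  have hnc₂ : Tendsto (fun n : ℕ => (n : ℝ) ^ c₂) atTop atTop :=
    (tendsto_rpow_atTop hc₂pos).comp tendsto_natCast_atTop_atTop
  filter_upwards [hnκ.eventually_ge_atTop 2, hnκ.eventually_ge_atTop (4 / c₂ + 2),
    hnc₂.eventually_ge_atTop C, eventually_ge_atTop 3] with n h2 h4c h3C h3n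
  intro N hN
  set nn : ℝ := (n : ℝ) with hnn
  have hn3 : (3 : ℝ) ≤ nn := by rw [hnn]; exact_mod_cast h3n
  have hn0 : 0 < nn := by linarith
  have hn1 : 1 ≤ nn := by linarith
  set k : ℕ := ⌊nn ^ κ⌋₊ with hkdef
  set K : ℝ := (k : ℝ) with hKdef
  set cst : ℝ := (1 + ε) * ((d : ℝ) - κ) with hcstdef
  have hEeq : exp (-((1 + ε) * (((d : ℝ) - κ) * log nn))) = nn ^ (-cst) := by
    rw [rpow_def_of_pos hn0, hcstdef]
    congr 1
    ring
  set E : ℝ := exp (-((1 + ε) * (((d : ℝ) - κ) * log nn))) with hEdef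
  have hEpos : 0 < E := exp_pos _
  have hKge : nn ^ κ / 2 ≤ K := by
    have h1 : nn ^ κ - 1 < K := by
      have := Nat.sub_one_lt_floor (nn ^ κ)
      rw [hKdef, hkdef]
      exact_mod_cast this
    linarith
  have hk1 : 1 ≤ k := by
    apply Nat.le_floor
    have : (1 : ℝ) ≤ nn ^ κ := by linarith
    exact_mod_cast this
  have hK0 : 0 < K := by
    have h' : (1 : ℝ) ≤ K := by rw [hKdef]; exact_mod_cast hk1
    linarith
  have step1 : (N.choose k : ℝ) ≤ (N : ℝ) ^ k / k.factorial := Nat.choose_le_pow_div k N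
  have hfacpos : (0 : ℝ) < k.factorial := by exact_mod_cast k.factorial_pos
  have step2 : (1 : ℝ) / k.factorial ≤ exp 1 ^ k / K ^ k := by
    have h := Real.pow_div_factorial_le_exp (x := K) hK0.le k
    have hexp : exp K = exp 1 ^ k := by
      rw [← Real.exp_nat_mul]
      norm_num
      exact hKdef
    rw [div_le_div_iff₀ hfacpos (by positivity)]
    have h2' := (div_le_iff₀ hfacpos).mp h
    rw [hexp] at h2'
    calc (1 : ℝ) * K ^ k = K ^ k := one_mul _
      _ ≤ exp 1 ^ k * k.factorial := h2'
  have hchoose : (N.choose k : ℝ) * E ^ k ≤ ((N : ℝ) * E * exp 1 / K) ^ k := by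
    calc (N.choose k : ℝ) * E ^ k ≤ ((N : ℝ) ^ k / k.factorial) * E ^ k := by
          exact mul_le_mul_of_nonneg_right step1 (pow_nonneg hEpos.le k)
      _ = ((N : ℝ) * E) ^ k * (1 / k.factorial) := by ring
      _ ≤ ((N : ℝ) * E) ^ k * (exp 1 ^ k / K ^ k) := by
          exact mul_le_mul_of_nonneg_left step2 (pow_nonneg (by positivity) k)
      _ = ((N : ℝ) * E * exp 1 / K) ^ k := by
          rw [div_pow, mul_pow ((N : ℝ) * E) (exp 1), mul_pow (N : ℝ) E, mul_div_assoc]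
  have hNE : (N : ℝ) ≤ (4 * nn) ^ (d : ℝ) := by
    have h45 : 2 * (nn + 1) + 3 ≤ 4 * nn := by linarith
    calc (N : ℝ) ≤ (2 * (nn + 1) + 3) ^ d := hN
      _ ≤ (4 * nn) ^ d := pow_le_pow_left₀ (by linarith) h45 d
      _ = (4 * nn) ^ (d : ℝ) := (rpow_natCast _ d).symm
  have hbase : (N : ℝ) * E * exp 1 / K ≤ nn ^ (-c₂) := by
    have hKpos' : 0 < nn ^ κ / 2 := by positivity
    have step : (N : ℝ) * E * exp 1 / K ≤ ((4 * nn) ^ (d : ℝ) * E * exp 1) / (nn ^ κ / 2) := by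
      apply div_le_div₀ (by positivity) _ hKpos' hKge
      exact mul_le_mul_of_nonneg_right (mul_le_mul_of_nonneg_right hNE hEpos.le) (exp_pos 1).le
    have heq : ((4 * nn) ^ (d : ℝ) * E * exp 1) / (nn ^ κ / 2) = C * nn ^ (-(2 * c₂)) := by
      have hsplit : nn ^ (-(2 * c₂)) = nn ^ (d : ℝ) * nn ^ (-cst) / nn ^ κ := by
        rw [← rpow_add hn0, ← rpow_sub hn0]
        congr 1
        rw [hcstdef, hc₂def]; ring
      rw [hEeq, mul_rpow (by norm_num) hn0.le, hsplit, hCdef,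
        show ((4 : ℝ) ^ (d : ℕ)) = (4 : ℝ) ^ ((d : ℕ) : ℝ) from (rpow_natCast _ d).symm]
      have hnκ0 : (nn ^ κ : ℝ) ≠ 0 := by positivity
      field_simp
    rw [heq] at step
    calc (N : ℝ) * E * exp 1 / K ≤ C * nn ^ (-(2 * c₂)) := step
      _ ≤ nn ^ c₂ * nn ^ (-(2 * c₂)) := by
          exact mul_le_mul_of_nonneg_right h3C (rpow_nonneg hn0.le _)
      _ = nn ^ (-c₂) := by rw [← rpow_add hn0]; congr 1; ring
  have hc₂K : 2 ≤ c₂ * K := by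
    have hK2 : 2 / c₂ ≤ K := by
      have h' : (4 / c₂ + 2) / 2 ≤ nn ^ κ / 2 := by linarith
      have h'' : 2 / c₂ ≤ (4 / c₂ + 2) / 2 := by
        rw [div_le_div_iff₀ hc₂pos (by norm_num : (0:ℝ) < 2)]
        have : 0 ≤ 2 * c₂ := by positivity
        calc (2:ℝ) * 2 = 4 := by norm_num
          _ ≤ 4 + 2 * c₂ := by linarith
          _ = (4 / c₂ + 2) * c₂ := by field_simp
      linarith
    calc (2 : ℝ) = c₂ * (2 / c₂) := by field_simp
      _ ≤ c₂ * K := mul_le_mul_of_nonneg_left hK2 hc₂pos.le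
  calc (N.choose k : ℝ) * E ^ k ≤ ((N : ℝ) * E * exp 1 / K) ^ k := hchoose
    _ ≤ (nn ^ (-c₂)) ^ k := by
        apply pow_le_pow_left₀ _ hbase
        positivity
    _ = nn ^ (-(c₂ * K)) := by
        rw [← rpow_natCast (nn ^ (-c₂)) k, ← rpow_mul hn0.le]
        congr 1
        rw [hKdef]; ring
    _ ≤ nn ^ (-2 : ℝ) := rpow_le_rpow_of_exponent_le hn1 (by linarith)



set_option maxHeartbeats 2000000 in
lemma lower_term_bound {d : ℕ} {κ ε : ℝ} (hd : 1 ≤ d) (hκ : 0 < κ) (hκd : κ < d)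
    (hε : 0 < ε) (hε1 : ε < 1) :
    ∀ᶠ n : ℕ in atTop, ∀ N : ℕ,
      (N : ℝ) ≤ (2 * (n : ℝ) + 3) ^ d →
      (((n / d : ℕ) : ℝ) + 1) ^ d ≤ N →
      (N.choose (N - (⌊((n : ℝ) + 1) ^ κ⌋₊ - 1)) : ℝ) *
        exp (-(exp (-((1 - ε) * (((d : ℝ) - κ) * log ((n : ℝ) + 1)))))) ^
          (N - (⌊((n : ℝ) + 1) ^ κ⌋₊ - 1)) ≤ (n : ℝ) ^ (-2 : ℝ) := by
  have hdκ : 0 < (d : ℝ) - κ := by linarith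
  have hD1 : (1 : ℝ) ≤ (d : ℝ) := by exact_mod_cast hd
  have hD0 : (0 : ℝ) < (d : ℝ) := by linarith
  set D : ℝ := (d : ℝ) with hDdef
  set β : ℝ := (1 - ε) * (D - κ) with hβdef
  have hβ0 : 0 ≤ β := by
    have : 0 ≤ 1 - ε := by linarith
    positivity
  set c₂ : ℝ := ε * (D - κ) / 2 with hc₂def
  have hc₂pos : 0 < c₂ := by positivity
  set C₅ : ℝ := D ^ (-D) * 2 ^ (-β) / 2 with hC₅def
  have hC₅pos : 0 < C₅ := by positivity
  set C₆ : ℝ := 2 ^ κ * (2 * D) + 2 with hC₆def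
  have hC₆pos : 0 < C₆ := by positivity
  set A : ℝ := 2 ^ (κ + 1) * D ^ D with hAdef
  -- eventualities
  have hAev : Tendsto (fun n : ℕ => (n : ℝ) ^ (D - κ)) atTop atTop :=
    (tendsto_rpow_atTop (by linarith)).comp tendsto_natCast_atTop_atTop
  have hlog : ∀ᶠ n : ℕ in atTop, ‖log (n : ℝ)‖ ≤ C₅ / C₆ * ‖(n : ℝ) ^ (2 * c₂)‖ :=
    tendsto_natCast_atTop_atTop.eventually
      ((isLittleO_log_rpow_atTop (by positivity : (0:ℝ) < 2 * c₂)).def (by positivity))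
  filter_upwards [hAev.eventually_ge_atTop A, hlog, eventually_ge_atTop 55] with n hA' hlog' h55
  intro N hNup hNlo
  set nn : ℝ := (n : ℝ) with hnn
  have hn55 : (55 : ℝ) ≤ nn := by rw [hnn]; exact_mod_cast h55
  have hn0 : 0 < nn := by linarith
  have hn1 : 1 ≤ nn := by linarith
  have hlogn1 : log 4 ≤ log nn := by
    apply log_le_log (by norm_num); linarith
  have hlogn0 : 0 ≤ log nn := log_nonneg hn1
  set k' : ℕ := ⌊(nn + 1) ^ κ⌋₊ with hk'def
  set p : ℝ := exp (-((1 - ε) * ((D - κ) * log (nn + 1)))) with hpdef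
  have hp0 : 0 < p := exp_pos _
  have hpeq : p = (nn + 1) ^ (-β) := by
    rw [hpdef, rpow_def_of_pos (by linarith), hβdef]
    congr 1
    ring
  -- lower bound on N in rpow form
  have hNlo' : D ^ (-D) * nn ^ D ≤ (N : ℝ) := by
    have hdiv : nn / D ≤ ((n / d : ℕ) : ℝ) + 1 := by
      have h1 : n < d * (n / d) + d := by
        have := Nat.div_add_mod n d
        have hmod : n % d < d := Nat.mod_lt n (by omega)
        omega
      have h2 : nn < D * (((n / d : ℕ) : ℝ) + 1) := by
        have : (n : ℝ) < (d : ℝ) * ((n / d : ℕ) : ℝ) + (d : ℝ) := by exact_mod_cast h1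
        rw [hnn, hDdef]; linarith
      rw [div_le_iff₀ hD0]
      linarith [h2]
    have h3 : (nn / D) ^ d ≤ (((n / d : ℕ) : ℝ) + 1) ^ d :=
      pow_le_pow_left₀ (by positivity) hdiv d
    have h4 : (nn / D) ^ d = D ^ (-D) * nn ^ D := by
      rw [div_pow, ← rpow_natCast nn d, ← rpow_natCast D d, ← hDdef,
        rpow_neg hD0.le, div_eq_mul_inv, mul_comm]
    calc D ^ (-D) * nn ^ D = (nn / D) ^ d := h4.symm
      _ ≤ (((n / d : ℕ) : ℝ) + 1) ^ d := h3
      _ ≤ (N : ℝ) := hNlo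
  have hN1 : (1 : ℕ) ≤ N := by
    have : (1 : ℝ) ≤ (((n / d : ℕ) : ℝ) + 1) ^ d := by
      have hx : (0:ℝ) ≤ ((n / d : ℕ) : ℝ) := Nat.cast_nonneg _
      exact one_le_pow₀ (by linarith)
    have h' : (1 : ℝ) ≤ (N : ℝ) := this.trans hNlo
    exact_mod_cast h'
  have hN0 : (0 : ℝ) < N := by exact_mod_cast hN1
  -- upper bound on k'
  have hk'up : (k' : ℝ) ≤ 2 ^ κ * nn ^ κ := by
    have h1 : (k' : ℝ) ≤ (nn + 1) ^ κ := Nat.floor_le (by positivity)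
    have h2 : (nn + 1) ^ κ ≤ (2 * nn) ^ κ := rpow_le_rpow (by linarith) (by linarith) hκ.le
    calc (k' : ℝ) ≤ (2 * nn) ^ κ := h1.trans h2
      _ = 2 ^ κ * nn ^ κ := mul_rpow (by norm_num) hn0.le
  -- k' small compared to N
  have hf2 : (k' : ℝ) ≤ (N : ℝ) / 2 := by
    have key : 2 ^ κ * nn ^ κ ≤ D ^ (-D) * nn ^ D / 2 := by
      rw [le_div_iff₀ (by norm_num : (0:ℝ) < 2)]
      have hsplit : nn ^ D = nn ^ (D - κ) * nn ^ κ := by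
        rw [← rpow_add hn0]; congr 1; ring
      have hmul : A * nn ^ κ ≤ nn ^ (D - κ) * nn ^ κ :=
        mul_le_mul_of_nonneg_right hA' (rpow_nonneg hn0.le _)
      calc 2 ^ κ * nn ^ κ * 2 = 2 ^ (κ + 1) * nn ^ κ := by
            rw [rpow_add (by norm_num : (0:ℝ) < 2), rpow_one]; ring
        _ = D ^ (-D) * (A * nn ^ κ) := by
            rw [hAdef, rpow_neg hD0.le]
            have hDD : (0:ℝ) < D ^ D := rpow_pos_of_pos hD0 D
            field_simp
        _ ≤ D ^ (-D) * (nn ^ (D - κ) * nn ^ κ) :=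
            mul_le_mul_of_nonneg_left hmul (by positivity)
        _ = D ^ (-D) * nn ^ D := by rw [← hsplit]
    calc (k' : ℝ) ≤ 2 ^ κ * nn ^ κ := hk'up
      _ ≤ D ^ (-D) * nn ^ D / 2 := key
      _ ≤ (N : ℝ) / 2 := by linarith [hNlo']
  have hk'N : k' - 1 ≤ N := by
    have h' : (k' : ℝ) ≤ (N : ℝ) := hf2.trans (by linarith)
    have : k' ≤ N := by exact_mod_cast h'
    omega
  set c : ℕ := N - (k' - 1) with hcdef
  have hcge : (N : ℝ) / 2 ≤ (c : ℝ) := by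
    have hcast : (c : ℝ) = (N : ℝ) - ((k' - 1 : ℕ) : ℝ) := by
      rw [hcdef, Nat.cast_sub hk'N]
    have h1 : ((k' - 1 : ℕ) : ℝ) ≤ (k' : ℝ) := by exact_mod_cast Nat.sub_le k' 1
    rw [hcast]
    linarith [hf2]
  -- choose bound
  have hchoose : (N.choose c : ℝ) ≤ (N : ℝ) ^ k' := by
    have h1 : N.choose c = N.choose (k' - 1) := by
      rw [hcdef, Nat.choose_symm hk'N]
    have h2 : N.choose (k' - 1) ≤ N ^ (k' - 1) := Nat.choose_le_pow N (k' - 1)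
    have h3 : N ^ (k' - 1) ≤ N ^ k' := Nat.pow_le_pow_right hN1 (Nat.sub_le _ _)
    calc (N.choose c : ℝ) = (N.choose (k' - 1) : ℝ) := by rw [h1]
      _ ≤ ((N : ℕ) ^ k' : ℕ) := by exact_mod_cast h2.trans h3
      _ = (N : ℝ) ^ k' := by push_cast; ring
  -- main exponent comparison
  have hlogN : log N ≤ 2 * D * log nn := by
    have h1 : (N : ℝ) ≤ (4 * nn) ^ d := by
      calc (N : ℝ) ≤ (2 * nn + 3) ^ d := hNup
        _ ≤ (4 * nn) ^ d := pow_le_pow_left₀ (by linarith) (by linarith) d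
    have h2 : log N ≤ log ((4 * nn) ^ d) := log_le_log hN0 h1
    rw [log_pow] at h2
    have h3 : log (4 * nn) = log 4 + log nn := log_mul (by norm_num) (by linarith)
    calc log N ≤ (d : ℝ) * log (4 * nn) := h2
      _ = D * (log 4 + log nn) := by rw [h3, hDdef]
      _ ≤ D * (log nn + log nn) := by
          apply mul_le_mul_of_nonneg_left _ hD0.le
          linarith
      _ = 2 * D * log nn := by ring
  have hplow : C₅ * nn ^ (κ + 2 * c₂) ≤ (N : ℝ) / 2 * p := by
    have hp1 : (2 * nn) ^ (-β) ≤ p := by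
      rw [hpeq]
      exact rpow_le_rpow_of_nonpos (by linarith) (by linarith) (by linarith)
    have hp2 : 2 ^ (-β) * nn ^ (-β) ≤ p := by
      rw [← mul_rpow (by norm_num) hn0.le]; exact hp1
    have hsplit : nn ^ (κ + 2 * c₂) = nn ^ D * nn ^ (-β) := by
      rw [← rpow_add hn0]; congr 1; rw [hc₂def, hβdef]; ring
    calc C₅ * nn ^ (κ + 2 * c₂) = (D ^ (-D) * nn ^ D / 2) * (2 ^ (-β) * nn ^ (-β)) := by
          rw [hsplit, hC₅def]; ring
      _ ≤ ((N : ℝ) / 2) * (2 ^ (-β) * nn ^ (-β)) := by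
          apply mul_le_mul_of_nonneg_right _ (by positivity)
          linarith [hNlo']
      _ ≤ ((N : ℝ) / 2) * p := mul_le_mul_of_nonneg_left hp2 (by positivity)
  have hmain : (k' : ℝ) * log N + 2 * log nn ≤ (N : ℝ) / 2 * p := by
    have hlog'' : C₆ * (nn ^ κ * log nn) ≤ C₅ * nn ^ (κ + 2 * c₂) := by
      have h1 : log nn ≤ C₅ / C₆ * nn ^ (2 * c₂) := by
        have := hlog'
        rw [Real.norm_eq_abs, Real.norm_eq_abs, abs_of_nonneg hlogn0,
          abs_of_nonneg (rpow_nonneg (by positivity) _)] at this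
        exact this
      have h2 : nn ^ κ * log nn ≤ nn ^ κ * (C₅ / C₆ * nn ^ (2 * c₂)) :=
        mul_le_mul_of_nonneg_left h1 (rpow_nonneg hn0.le _)
      calc C₆ * (nn ^ κ * log nn) ≤ C₆ * (nn ^ κ * (C₅ / C₆ * nn ^ (2 * c₂))) :=
            mul_le_mul_of_nonneg_left h2 hC₆pos.le
        _ = C₅ * (nn ^ κ * nn ^ (2 * c₂)) := by field_simp
        _ = C₅ * nn ^ (κ + 2 * c₂) := by rw [← rpow_add hn0]
    have hnκ1 : (1 : ℝ) ≤ nn ^ κ := one_le_rpow hn1 hκ.le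
    have hLHS : (k' : ℝ) * log N + 2 * log nn ≤ C₆ * (nn ^ κ * log nn) := by
      have h1 : (k' : ℝ) * log N ≤ (2 ^ κ * nn ^ κ) * (2 * D * log nn) := by
        apply mul_le_mul hk'up hlogN (log_nonneg (by exact_mod_cast hN1)) (by positivity)
      have h2 : 2 * log nn ≤ 2 * (nn ^ κ * log nn) := by
        apply mul_le_mul_of_nonneg_left _ (by norm_num)
        nlinarith
      calc (k' : ℝ) * log N + 2 * log nn
          ≤ (2 ^ κ * nn ^ κ) * (2 * D * log nn) + 2 * (nn ^ κ * log nn) := by linarith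
        _ = C₆ * (nn ^ κ * log nn) := by rw [hC₆def]; ring
    linarith [hlog'', hplow]
  -- final assembly
  have hcp : (N : ℝ) / 2 * p ≤ (c : ℝ) * p := mul_le_mul_of_nonneg_right hcge hp0.le
  have hNpow : (N : ℝ) ^ k' = exp ((k' : ℝ) * log N) := by
    rw [Real.exp_nat_mul, exp_log hN0]
  have hppow : exp (-p) ^ c = exp (-((c : ℝ) * p)) := by
    rw [← Real.exp_nat_mul]
    congr 1
    ring
  have hfinal : (N.choose c : ℝ) * exp (-p) ^ c ≤ exp ((k' : ℝ) * log N - (c : ℝ) * p) := by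
    calc (N.choose c : ℝ) * exp (-p) ^ c ≤ (N : ℝ) ^ k' * exp (-p) ^ c :=
          mul_le_mul_of_nonneg_right hchoose (pow_nonneg (exp_pos _).le c)
      _ = exp ((k' : ℝ) * log N) * exp (-((c : ℝ) * p)) := by rw [hNpow, hppow]
      _ = exp ((k' : ℝ) * log N - (c : ℝ) * p) := by rw [← exp_add, sub_eq_add_neg]
  have hn2 : (nn : ℝ) ^ (-2 : ℝ) = exp (-(2 * log nn)) := by
    rw [rpow_def_of_pos hn0]
    congr 1
    ring
  calc (N.choose c : ℝ) * exp (-p) ^ c ≤ exp ((k' : ℝ) * log N - (c : ℝ) * p) := hfinal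
    _ ≤ exp (-(2 * log nn)) := by
        apply exp_le_exp.mpr
        have := hmain.trans hcp
        linarith
    _ = nn ^ (-2 : ℝ) := hn2.symm


lemma nat_aux (a b c k : ℕ) (h1 : a + b = c) (h2 : a < k) : c - (k - 1) ≤ b := by omega

set_option maxHeartbeats 2000000 in
lemma key {d : ℕ} (hd : 1 ≤ d) {γ : ℝ} (hγ : 0 < γ) {κ : ℝ} (hκ : 0 < κ) (hκd : κ < d)
    {Ω : Type*} [MeasurableSpace Ω] {μ : Measure Ω} [IsProbabilityMeasure μ]
    {ξ : (Fin d → ℤ) → Ω → ℝ} (hmeas : ∀ z, Measurable (ξ z))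
    (hindep : iIndepFun ξ μ)
    (hdist : ∀ z, ∀ x : ℝ, 0 ≤ x →
      μ {ω | ξ z ω < x} = ENNReal.ofReal (1 - exp (-(x ^ γ))))
    (X : ℝ → Ω → ℝ)
    (hX : ∀ ω, ∀ r ≥ (2 : ℝ),
      (∃ z : Fin d → ℤ, ((∑ i, |z i| : ℤ) : ℝ) ≤ r ∧ ξ z ω = X r ω) ∧
      ⌊r ^ κ⌋₊ ≤ {z : Fin d → ℤ | ((∑ i, |z i| : ℤ) : ℝ) ≤ r ∧ X r ω ≤ ξ z ω}.ncard ∧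
      {z : Fin d → ℤ | ((∑ i, |z i| : ℤ) : ℝ) ≤ r ∧ X r ω < ξ z ω}.ncard < ⌊r ^ κ⌋₊)
    {ε : ℝ} (hε : 0 < ε) (hε1 : ε < 1) :
    ∀ᵐ ω ∂μ, ∀ᶠ r : ℝ in atTop,
      X r ω ≤ ((1 + ε) * (((d : ℝ) - κ) * log r)) ^ (1 / γ) ∧
      ((1 - ε) * (((d : ℝ) - κ) * log r)) ^ (1 / γ) ≤ X r ω := by
  have hκd' : κ < (d : ℝ) := hκd
  have hdκ : 0 < (d : ℝ) - κ := by linarith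
  have hpow : ∀ s : ℝ, 0 ≤ s → (s ^ (1 / γ)) ^ γ = s := fun s hs => by
    rw [← rpow_mul hs, one_div_mul_cancel hγ.ne', rpow_one]
  -- measure bound for the upper-deviation events
  have hUm : ∀ᶠ n : ℕ in atTop,
      μ {ω | ⌊(n : ℝ) ^ κ⌋₊ ≤ {z | z ∈ (ballSet_finite d ((n : ℝ) + 1)).toFinset ∧
          ξ z ω ∈ Set.Ici (((1 + ε) * (((d : ℝ) - κ) * log n)) ^ (1 / γ))}.ncard}
        ≤ ENNReal.ofReal ((n : ℝ) ^ (-2 : ℝ)) := by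
    filter_upwards [upper_term_bound (d := d) hκ hκd' hε] with n hterm
    have hs0 : 0 ≤ (1 + ε) * (((d : ℝ) - κ) * log n) :=
      mul_nonneg (by linarith) (mul_nonneg hdκ.le (log_natCast_nonneg n))
    have hq : ∀ z, μ (ξ z ⁻¹' Set.Ici (((1 + ε) * (((d : ℝ) - κ) * log n)) ^ (1 / γ)))
        ≤ ENNReal.ofReal (exp (-((1 + ε) * (((d : ℝ) - κ) * log n)))) := by
      intro z
      rw [tail_eq hmeas hdist z (rpow_nonneg hs0 _), hpow _ hs0]
    have hb := count_bound hindep ((ballSet_finite d ((n : ℝ) + 1)).toFinset)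
      ⌊(n : ℝ) ^ κ⌋₊ _ measurableSet_Ici _ hq
    refine hb.trans ?_
    have hcard : (((ballSet_finite d ((n : ℝ) + 1)).toFinset.card : ℕ) : ℝ)
        ≤ (2 * ((n : ℝ) + 1) + 3) ^ d := by
      rw [← Set.ncard_eq_toFinset_card _ (ballSet_finite d ((n : ℝ) + 1))]
      exact ballSet_ncard_le d (by positivity)
    calc ((ballSet_finite d ((n : ℝ) + 1)).toFinset.card.choose ⌊(n : ℝ) ^ κ⌋₊ : ℝ≥0∞) *
          ENNReal.ofReal (exp (-((1 + ε) * (((d : ℝ) - κ) * log n)))) ^ ⌊(n : ℝ) ^ κ⌋₊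
        = ENNReal.ofReal
            (((ballSet_finite d ((n : ℝ) + 1)).toFinset.card.choose ⌊(n : ℝ) ^ κ⌋₊ : ℝ) *
            exp (-((1 + ε) * (((d : ℝ) - κ) * log n))) ^ ⌊(n : ℝ) ^ κ⌋₊) := by
          rw [ENNReal.ofReal_mul (Nat.cast_nonneg _), ENNReal.ofReal_pow (exp_pos _).le,
            ENNReal.ofReal_natCast]
      _ ≤ ENNReal.ofReal ((n : ℝ) ^ (-2 : ℝ)) :=
          ENNReal.ofReal_le_ofReal (hterm _ hcard)
  -- measure bound for the lower-deviation events
  have hVm : ∀ᶠ n : ℕ in atTop,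
      μ {ω | (ballSet_finite d (n : ℝ)).toFinset.card - (⌊((n : ℝ) + 1) ^ κ⌋₊ - 1) ≤
          {z | z ∈ (ballSet_finite d (n : ℝ)).toFinset ∧
          ξ z ω ∈ Set.Iio (((1 - ε) * (((d : ℝ) - κ) * log ((n : ℝ) + 1))) ^ (1 / γ))}.ncard}
        ≤ ENNReal.ofReal ((n : ℝ) ^ (-2 : ℝ)) := by
    filter_upwards [lower_term_bound (d := d) hd hκ hκd' hε hε1] with n hterm
    have hs0 : 0 ≤ (1 - ε) * (((d : ℝ) - κ) * log ((n : ℝ) + 1)) := by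
      have h0 : (0:ℝ) ≤ (n : ℝ) := Nat.cast_nonneg n
      have h1 : (0:ℝ) ≤ log ((n : ℝ) + 1) := log_nonneg (by linarith)
      have h2 : (0:ℝ) ≤ 1 - ε := by linarith
      positivity
    have hq : ∀ z, μ (ξ z ⁻¹' Set.Iio (((1 - ε) * (((d : ℝ) - κ) * log ((n : ℝ) + 1))) ^ (1 / γ)))
        ≤ ENNReal.ofReal (exp (-(exp (-((1 - ε) * (((d : ℝ) - κ) * log ((n : ℝ) + 1))))))) := by
      intro z
      have h := head_le (μ := μ) hdist z (rpow_nonneg hs0 (1/γ))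
      rwa [hpow _ hs0] at h
    have hb := count_bound hindep ((ballSet_finite d (n : ℝ)).toFinset)
      ((ballSet_finite d (n : ℝ)).toFinset.card - (⌊((n : ℝ) + 1) ^ κ⌋₊ - 1)) _
      measurableSet_Iio _ hq
    refine hb.trans ?_
    have hcard : (((ballSet_finite d (n : ℝ)).toFinset.card : ℕ) : ℝ)
        ≤ (2 * (n : ℝ) + 3) ^ d := by
      rw [← Set.ncard_eq_toFinset_card _ (ballSet_finite d (n : ℝ))]
      exact ballSet_ncard_le d (by positivity)
    have hcard2 : (((n / d : ℕ) : ℝ) + 1) ^ d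
        ≤ (((ballSet_finite d (n : ℝ)).toFinset.card : ℕ) : ℝ) := by
      rw [← Set.ncard_eq_toFinset_card _ (ballSet_finite d (n : ℝ))]
      exact ballSet_ncard_ge d hd n
    calc ((ballSet_finite d (n : ℝ)).toFinset.card.choose
            ((ballSet_finite d (n : ℝ)).toFinset.card - (⌊((n : ℝ) + 1) ^ κ⌋₊ - 1)) : ℝ≥0∞) *
          ENNReal.ofReal (exp (-(exp (-((1 - ε) * (((d : ℝ) - κ) * log ((n : ℝ) + 1))))))) ^
            ((ballSet_finite d (n : ℝ)).toFinset.card - (⌊((n : ℝ) + 1) ^ κ⌋₊ - 1))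
        = ENNReal.ofReal (((ballSet_finite d (n : ℝ)).toFinset.card.choose
            ((ballSet_finite d (n : ℝ)).toFinset.card - (⌊((n : ℝ) + 1) ^ κ⌋₊ - 1)) : ℝ) *
            exp (-(exp (-((1 - ε) * (((d : ℝ) - κ) * log ((n : ℝ) + 1)))))) ^
            ((ballSet_finite d (n : ℝ)).toFinset.card - (⌊((n : ℝ) + 1) ^ κ⌋₊ - 1))) := by
          rw [ENNReal.ofReal_mul (Nat.cast_nonneg _), ENNReal.ofReal_pow (exp_pos _).le,
            ENNReal.ofReal_natCast]
      _ ≤ ENNReal.ofReal ((n : ℝ) ^ (-2 : ℝ)) :=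
          ENNReal.ofReal_le_ofReal (hterm _ hcard hcard2)
  -- Borel–Cantelli
  filter_upwards [bc_helper _ hUm, bc_helper _ hVm] with ω hU hV
  obtain ⟨nU, hnU⟩ := eventually_atTop.mp hU
  obtain ⟨nV, hnV⟩ := eventually_atTop.mp hV
  rw [eventually_atTop]
  refine ⟨((max (max nU nV) 3 : ℕ) : ℝ), fun r hr => ?_⟩
  have h3r : (3 : ℝ) ≤ r := by
    have h1 : ((3 : ℕ) : ℝ) ≤ ((max (max nU nV) 3 : ℕ) : ℝ) := by
      exact_mod_cast le_max_right (max nU nV) 3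
    have := h1.trans hr
    exact_mod_cast this
  have hr0 : 0 < r := by linarith
  set n : ℕ := ⌊r⌋₊ with hndef
  have hnM : max (max nU nV) 3 ≤ n := Nat.le_floor hr
  have hnU' : nU ≤ n := le_trans (le_trans (le_max_left _ _) (le_max_left _ _)) hnM
  have hnV' : nV ≤ n := le_trans (le_trans (le_max_right _ _) (le_max_left _ _)) hnM
  have hn3 : 3 ≤ n := le_trans (le_max_right _ _) hnM
  have hn0 : (0 : ℝ) < (n : ℝ) := by
    have : (3 : ℝ) ≤ (n : ℝ) := by exact_mod_cast hn3
    linarith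
  have hfl : (n : ℝ) ≤ r := Nat.floor_le hr0.le
  have hfu : r < (n : ℝ) + 1 := by
    have := Nat.lt_floor_add_one r
    exact_mod_cast this
  obtain ⟨-, hX2, hX3⟩ := hX ω r (by linarith)
  clear_value n
  constructor
  · -- upper bound
    have hstepA : X r ω ≤ ((1 + ε) * (((d : ℝ) - κ) * log n)) ^ (1 / γ) := by
      by_contra hcon
      push_neg at hcon
      apply hnU n hnU'
      have hsub : {z : Fin d → ℤ | ((∑ i, |z i| : ℤ) : ℝ) ≤ r ∧ X r ω ≤ ξ z ω} ⊆
          {z | z ∈ (ballSet_finite d ((n : ℝ) + 1)).toFinset ∧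
            ξ z ω ∈ Set.Ici (((1 + ε) * (((d : ℝ) - κ) * log n)) ^ (1 / γ))} := by
        intro z hz
        refine ⟨(ballSet_finite d ((n : ℝ) + 1)).mem_toFinset.mpr ?_, ?_⟩
        · show ((∑ i, |z i| : ℤ) : ℝ) ≤ (n : ℝ) + 1
          linarith [hz.1]
        · exact Set.mem_Ici.mpr (le_trans hcon.le hz.2)
      have hfin : {z | z ∈ (ballSet_finite d ((n : ℝ) + 1)).toFinset ∧
          ξ z ω ∈ Set.Ici (((1 + ε) * (((d : ℝ) - κ) * log n)) ^ (1 / γ))}.Finite :=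
        (ballSet_finite d ((n : ℝ) + 1)).subset
          (fun z hz => (ballSet_finite d ((n : ℝ) + 1)).mem_toFinset.mp hz.1)
      have hmono := Set.ncard_le_ncard hsub hfin
      have hfloor : ⌊(n : ℝ) ^ κ⌋₊ ≤ ⌊r ^ κ⌋₊ :=
        Nat.floor_mono (rpow_le_rpow hn0.le hfl hκ.le)
      exact le_trans hfloor (le_trans hX2 hmono)
    refine hstepA.trans (rpow_le_rpow ?_ ?_ (by positivity))
    · exact mul_nonneg (by linarith) (mul_nonneg hdκ.le (log_natCast_nonneg n))
    · have hlog : log (n : ℝ) ≤ log r := log_le_log hn0 hfl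
      have h1 : (0:ℝ) ≤ 1 + ε := by linarith
      apply mul_le_mul_of_nonneg_left _ h1
      exact mul_le_mul_of_nonneg_left hlog hdκ.le
  · -- lower bound
    have hstepA : ((1 - ε) * (((d : ℝ) - κ) * log ((n : ℝ) + 1))) ^ (1 / γ) ≤ X r ω := by
      by_contra hcon
      push_neg at hcon
      apply hnV n hnV'
      set t : ℝ := ((1 - ε) * (((d : ℝ) - κ) * log ((n : ℝ) + 1))) ^ (1 / γ) with htdef
      set A : Set (Fin d → ℤ) :=
        {z | z ∈ (ballSet_finite d (n : ℝ)).toFinset ∧ t ≤ ξ z ω} with hAdef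
      set B : Set (Fin d → ℤ) :=
        {z | z ∈ (ballSet_finite d (n : ℝ)).toFinset ∧ ξ z ω ∈ Set.Iio t} with hBdef
      have hAfin : A.Finite := (ballSet_finite d (n : ℝ)).subset
        (fun z hz => (ballSet_finite d (n : ℝ)).mem_toFinset.mp hz.1)
      have hBfin : B.Finite := (ballSet_finite d (n : ℝ)).subset
        (fun z hz => (ballSet_finite d (n : ℝ)).mem_toFinset.mp hz.1)
      have hdisj : Disjoint A B := by
        rw [Set.disjoint_left]
        rintro z ⟨-, hz2⟩ ⟨-, hz4⟩
        exact absurd hz4 (not_lt.mpr hz2)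
      have hunion : A ∪ B = ↑((ballSet_finite d (n : ℝ)).toFinset) := by
        ext z
        constructor
        · rintro (hz | hz) <;> exact hz.1
        · intro hz
          rcases le_or_gt t (ξ z ω) with h | h
          · exact Or.inl ⟨hz, h⟩
          · exact Or.inr ⟨hz, h⟩
      have hcardsum : A.ncard + B.ncard = (ballSet_finite d (n : ℝ)).toFinset.card := by
        rw [← Set.ncard_union_eq hdisj hAfin hBfin, hunion, Set.ncard_coe_finset]
      have hAsub : A ⊆ {z : Fin d → ℤ | ((∑ i, |z i| : ℤ) : ℝ) ≤ r ∧ X r ω < ξ z ω} := by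
        intro z hz
        refine ⟨?_, lt_of_lt_of_le hcon hz.2⟩
        have := (ballSet_finite d (n : ℝ)).mem_toFinset.mp hz.1
        have h' : ((∑ i, |z i| : ℤ) : ℝ) ≤ (n : ℝ) := this
        linarith
      have hrfin : {z : Fin d → ℤ | ((∑ i, |z i| : ℤ) : ℝ) ≤ r ∧ X r ω < ξ z ω}.Finite :=
        (ballSet_finite d r).subset (fun z hz => hz.1)
      clear_value t A B
      have hAlt : A.ncard < ⌊((n : ℝ) + 1) ^ κ⌋₊ := by
        have h1 := Set.ncard_le_ncard hAsub hrfin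
        have h2 : ⌊r ^ κ⌋₊ ≤ ⌊((n : ℝ) + 1) ^ κ⌋₊ :=
          Nat.floor_mono (rpow_le_rpow hr0.le hfu.le hκ.le)
        exact lt_of_le_of_lt h1 (lt_of_lt_of_le hX3 h2)
      show (ballSet_finite d (n : ℝ)).toFinset.card - (⌊((n : ℝ) + 1) ^ κ⌋₊ - 1) ≤ B.ncard
      exact nat_aux _ _ _ _ hcardsum hAlt
    refine le_trans (rpow_le_rpow ?_ ?_ (by positivity)) hstepA
    · have h1 : (0:ℝ) ≤ log r := log_nonneg (by linarith)
      have h2 : (0:ℝ) ≤ 1 - ε := by linarith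
      positivity
    · have hlog : log r ≤ log ((n : ℝ) + 1) := log_le_log hr0 hfu.le
      have h1 : (0:ℝ) ≤ 1 - ε := by linarith
      apply mul_le_mul_of_nonneg_left _ h1
      exact mul_le_mul_of_nonneg_left hlog hdκ.le

end WeibullOS

open WeibullOS

/-- For i.i.d. Weibull(γ) potentials on `ℤ^d` and `κ ∈ (0,d)`, the `⌊r^κ⌋`-th largest
value `ξ_r^{(⌊r^κ⌋)}` of `ξ` over the ℓ¹-ball of radius `r` satisfies, almost surely,
`ξ_r^{(⌊r^κ⌋)} ∼ ((d-κ) log r)^{1/γ}` as `r → ∞`. -/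
theorem weibull_order_statistic_asymptotics
    (d : ℕ) (hd : 1 ≤ d) (γ : ℝ) (hγ : 0 < γ) (κ : ℝ) (hκ : 0 < κ) (hκd : κ < d)
    {Ω : Type*} [MeasurableSpace Ω] (μ : Measure Ω) [IsProbabilityMeasure μ]
    (ξ : (Fin d → ℤ) → Ω → ℝ)
    (hmeas : ∀ z, Measurable (ξ z))
    (hindep : iIndepFun ξ μ)
    (hdist : ∀ z, ∀ x : ℝ, 0 ≤ x →
      μ {ω | ξ z ω < x} = ENNReal.ofReal (1 - exp (-(x ^ γ))))
    (X : ℝ → Ω → ℝ)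
    (hX : ∀ ω, ∀ r ≥ (2 : ℝ),
      (∃ z : Fin d → ℤ, ((∑ i, |z i| : ℤ) : ℝ) ≤ r ∧ ξ z ω = X r ω) ∧
      ⌊r ^ κ⌋₊ ≤ {z : Fin d → ℤ | ((∑ i, |z i| : ℤ) : ℝ) ≤ r ∧ X r ω ≤ ξ z ω}.ncard ∧
      {z : Fin d → ℤ | ((∑ i, |z i| : ℤ) : ℝ) ≤ r ∧ X r ω < ξ z ω}.ncard < ⌊r ^ κ⌋₊) :
    ∀ᵐ ω ∂μ, Tendsto (fun r => X r ω / (((d : ℝ) - κ) * log r) ^ (1 / γ))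
      atTop (nhds 1) := by
  have hκd' : κ < (d : ℝ) := hκd
  have hdκ : 0 < (d : ℝ) - κ := by linarith
  have hεj : ∀ j : ℕ, (0 : ℝ) < 1 / ((j : ℝ) + 2) ∧ 1 / ((j : ℝ) + 2) < 1 := by
    intro j
    have h0 : (0:ℝ) ≤ (j : ℝ) := Nat.cast_nonneg j
    constructor
    · positivity
    · rw [div_lt_one (by linarith)]
      linarith
  have hae : ∀ᵐ ω ∂μ, ∀ j : ℕ, ∀ᶠ r : ℝ in atTop,
      X r ω ≤ ((1 + 1 / ((j : ℝ) + 2)) * (((d : ℝ) - κ) * log r)) ^ (1 / γ) ∧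
      ((1 - 1 / ((j : ℝ) + 2)) * (((d : ℝ) - κ) * log r)) ^ (1 / γ) ≤ X r ω := by
    rw [ae_all_iff]
    intro j
    exact key hd hγ hκ hκd hmeas hindep hdist X hX (hεj j).1 (hεj j).2
  filter_upwards [hae] with ω hω
  rw [Metric.tendsto_atTop]
  intro δ hδ
  -- choose a suitable j
  have htend : Tendsto (fun j : ℕ => 1 / ((j : ℝ) + 2)) atTop (nhds 0) := by
    apply Tendsto.div_atTop tendsto_const_nhds
    exact tendsto_atTop_add_const_right atTop 2 tendsto_natCast_atTop_atTop
  have hu : Tendsto (fun j : ℕ => (1 + 1 / ((j : ℝ) + 2)) ^ (1 / γ)) atTop (nhds 1) := by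
    have h1 : Tendsto (fun j : ℕ => 1 + 1 / ((j : ℝ) + 2)) atTop (nhds 1) := by
      simpa using tendsto_const_nhds.add htend
    have h2 := h1.rpow_const (p := 1 / γ) (Or.inl one_ne_zero)
    simpa using h2
  have hl : Tendsto (fun j : ℕ => (1 - 1 / ((j : ℝ) + 2)) ^ (1 / γ)) atTop (nhds 1) := by
    have h1 : Tendsto (fun j : ℕ => 1 - 1 / ((j : ℝ) + 2)) atTop (nhds 1) := by
      simpa using tendsto_const_nhds.sub htend
    have h2 := h1.rpow_const (p := 1 / γ) (Or.inl one_ne_zero)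
    simpa using h2
  have hev : ∀ᶠ j : ℕ in atTop,
      (1 + 1 / ((j : ℝ) + 2)) ^ (1 / γ) < 1 + δ ∧
      1 - δ < (1 - 1 / ((j : ℝ) + 2)) ^ (1 / γ) := by
    have e1 := hu.eventually_lt_const (by linarith : (1:ℝ) < 1 + δ)
    have e2 := hl.eventually_const_lt (by linarith : 1 - δ < (1:ℝ))
    exact e1.and e2
  obtain ⟨j, hj1, hj2⟩ := hev.exists
  obtain ⟨N, hN⟩ := eventually_atTop.mp ((hω j).and (eventually_gt_atTop 1))
  refine ⟨N, fun r hrN => ?_⟩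
  obtain ⟨⟨hup, hlo⟩, hr1⟩ := hN r hrN
  have hlogr : 0 < log r := log_pos hr1
  have hs : 0 < ((d : ℝ) - κ) * log r := by positivity
  have ha : 0 < (((d : ℝ) - κ) * log r) ^ (1 / γ) := rpow_pos_of_pos hs _
  have hj0 : (0:ℝ) ≤ 1 - 1 / ((j : ℝ) + 2) := by linarith [(hεj j).2]
  have hmulU : ((1 + 1 / ((j : ℝ) + 2)) * (((d : ℝ) - κ) * log r)) ^ (1 / γ)
      = (1 + 1 / ((j : ℝ) + 2)) ^ (1 / γ) * (((d : ℝ) - κ) * log r) ^ (1 / γ) :=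
    mul_rpow (by linarith [(hεj j).1]) hs.le
  have hmulL : ((1 - 1 / ((j : ℝ) + 2)) * (((d : ℝ) - κ) * log r)) ^ (1 / γ)
      = (1 - 1 / ((j : ℝ) + 2)) ^ (1 / γ) * (((d : ℝ) - κ) * log r) ^ (1 / γ) :=
    mul_rpow hj0 hs.le
  have hU' : X r ω / (((d : ℝ) - κ) * log r) ^ (1 / γ) ≤ (1 + 1 / ((j : ℝ) + 2)) ^ (1 / γ) := by
    rw [div_le_iff₀ ha]
    calc X r ω ≤ ((1 + 1 / ((j : ℝ) + 2)) * (((d : ℝ) - κ) * log r)) ^ (1 / γ) := hup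
      _ = (1 + 1 / ((j : ℝ) + 2)) ^ (1 / γ) * (((d : ℝ) - κ) * log r) ^ (1 / γ) := hmulU
  have hL' : (1 - 1 / ((j : ℝ) + 2)) ^ (1 / γ) ≤ X r ω / (((d : ℝ) - κ) * log r) ^ (1 / γ) := by
    rw [le_div_iff₀ ha]
    calc (1 - 1 / ((j : ℝ) + 2)) ^ (1 / γ) * (((d : ℝ) - κ) * log r) ^ (1 / γ)
        = ((1 - 1 / ((j : ℝ) + 2)) * (((d : ℝ) - κ) * log r)) ^ (1 / γ) := hmulL.symm
      _ ≤ X r ω := hlo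
  rw [Real.dist_eq, abs_lt]
  constructor
  · linarith
  · linarith
end
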